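/- Let A be a commutative associative algebra over a field of characteristic 0 containing no nonzero nilpotent elements, and let {·,…,·} : A^n → A be an n-linear bracket which satisfies the Filippov identity {f_1,…,f_{n−1},{g_1,…,g_n}} = Σ_{k=1}^n {g_1,…,g_{k−1},{f_1,…,f_{n−1},g_k},g_{k+1},…,g_n} and the Leibniz rule in each argument, {f_1,…,f_i·f_i′,…,f_n} = f_i·{f_1,…,f_i′,…,f_n} + {f_1,…,f_i,…,f_n}·f_i′ (i.e. a Nambu–Loday bracket). Then the bracket is skew-symmetric (alternating); in particular every Nambu–Loday bracket on such an algebra is a Nambu–Poisson bracket. -/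
import Mathlib

open Function Finset

section NL
variable {k A : Type*} [Field k] [CharZero k] [CommRing A] [Algebra k A]

private lemma nl_nsmul_cancel (k : Type*) [Field k] [CharZero k] [AddCommGroup A'] [Module k A']
    {m : ℕ} (hm : m ≠ 0) {x : A'} (h : m • x = 0) : x = 0 := by
  have h1 : (m : k) • x = 0 := by rw [Nat.cast_smul_eq_nsmul]; exact h
  rcases smul_eq_zero.mp h1 with h2 | h2
  · exact absurd h2 (Nat.cast_ne_zero.mpr hm)
  · exact h2

variable {n : ℕ} {N : (Fin n → A) → A} {L : Fin n}

private lemma nl_star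
    (hfilL : ∀ f g : Fin n → A, N (update f L (N g)) =
      ∑ j : Fin n, N (update g j (N (update f L (g j)))))
    (f : Fin n → A) (z : A) :
    ∑ j ∈ univ.erase L, N (update (update f L z) j (N (update f L (f j)))) = 0 := by
  have h := hfilL f (update f L z)
  have h2 : N (update f L (N (update f L z))) =
      N (update (update f L z) L (N (update f L ((update f L z) L)))) +
      ∑ j ∈ univ.erase L, N (update (update f L z) j (N (update f L ((update f L z) j)))) :=
    h.trans (Finset.add_sum_erase _ _ (mem_univ L)).symm
  rw [Function.update_idem, Function.update_self] at h2
  rw [Finset.sum_congr rfl (fun j hj => by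
    rw [Function.update_of_ne (Finset.mem_erase.mp hj).1])] at h2
  exact (left_eq_add.mp h2)

private lemma nl_f2
    (hfilL : ∀ f g : Fin n → A, N (update f L (N g)) =
      ∑ j : Fin n, N (update g j (N (update f L (g j)))))
    (f g : Fin n → A) (z : A) :
    (∑ j ∈ univ.erase L, N (update (update g L z) j (N (update f L (g j)))))
      + (∑ j ∈ univ.erase L, N (update (update f L z) j (N (update g L (f j))))) = 0 := by
  have h1 : N (update f L (N (update g L z))) =
      N (update (update g L z) L (N (update f L ((update g L z) L)))) +
      ∑ j ∈ univ.erase L, N (update (update g L z) j (N (update f L ((update g L z) j)))) :=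
    (hfilL f (update g L z)).trans (Finset.add_sum_erase _ _ (mem_univ L)).symm
  have h2 : N (update g L (N (update f L z))) =
      N (update (update f L z) L (N (update g L ((update f L z) L)))) +
      ∑ j ∈ univ.erase L, N (update (update f L z) j (N (update g L ((update f L z) j)))) :=
    (hfilL g (update f L z)).trans (Finset.add_sum_erase _ _ (mem_univ L)).symm
  rw [Function.update_idem, Function.update_self] at h1 h2
  rw [Finset.sum_congr rfl (fun j hj => by
    rw [Function.update_of_ne (Finset.mem_erase.mp hj).1])] at h1
  rw [Finset.sum_congr rfl (fun j hj => by
    rw [Function.update_of_ne (Finset.mem_erase.mp hj).1])] at h2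
  linear_combination -h1 - h2


private lemma nl_key
    (hlin : ∀ (i : Fin n) (f : Fin n → A), IsLinearMap k fun a => N (update f i a))
    (hleib : ∀ (i : Fin n) (f : Fin n → A) (a b : A),
      N (update f i (a * b)) = a * N (update f i b) + N (update f i a) * b)
    (hfilL : ∀ f g : Fin n → A, N (update f L (N g)) =
      ∑ j : Fin n, N (update g j (N (update f L (g j)))))
    (f : Fin n → A) (j₀ : Fin n) (hj : j₀ ≠ L) (z : A) :
    N (update f L (f j₀)) * N (update f L z) * 4
      + (∑ j ∈ (univ.erase L).erase j₀,
          N (update f L (f j)) * N (update (update f L z) j (f j₀))) * 2 = 0 := by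
  have hj₀mem : j₀ ∈ univ.erase L := Finset.mem_erase.mpr ⟨hj, mem_univ j₀⟩
  have hBj₀ : (update f L z) j₀ = f j₀ := Function.update_of_ne hj _ _
  have upd_self : ∀ (B : Fin n → A) (i : Fin n) (a : A), B i = a → update B i a = B :=
    fun B i a h => Function.update_eq_self_iff.mpr h.symm
  have add_slot : ∀ (B : Fin n → A) (i : Fin n) (a b : A),
      N (update B i (a + b)) = N (update B i a) + N (update B i b) :=
    fun B i a b => (hlin i B).map_add a b
  have expand2 : ∀ (B : Fin n → A) (i : Fin n) (c : A),
      N (update B i (f j₀ * c + c * f j₀)) =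
        f j₀ * N (update B i c) + N (update B i c) * f j₀
          + (N (update B i (f j₀)) * c + c * N (update B i (f j₀))) := by
    intro B i c
    rw [add_slot, hleib, hleib]
    ring
  have hgz : update (update f j₀ (f j₀ * f j₀)) L z
      = update (update f L z) j₀ (f j₀ * f j₀) := Function.update_comm hj _ _ _
  have hDg : ∀ c : A, N (update (update f j₀ (f j₀ * f j₀)) L c)
      = f j₀ * N (update f L c) + N (update f L c) * f j₀ := by
    intro c
    rw [Function.update_comm hj, hleib,
      upd_self (update f L c) j₀ (f j₀) (Function.update_of_ne hj _ _)]
  -- the antisymmetrized Filippov identity with g := update f j₀ (f j₀ * f j₀)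
  have hF2 := nl_f2 hfilL f (update f j₀ (f j₀ * f j₀)) z
  -- split off the j₀ term from both sums
  have e1 : (∑ j ∈ univ.erase L,
        N (update (update (update f j₀ (f j₀ * f j₀)) L z) j
          (N (update f L ((update f j₀ (f j₀ * f j₀)) j)))))
      = N (update (update (update f j₀ (f j₀ * f j₀)) L z) j₀
          (N (update f L ((update f j₀ (f j₀ * f j₀)) j₀))))
        + ∑ j ∈ (univ.erase L).erase j₀,
            N (update (update (update f j₀ (f j₀ * f j₀)) L z) j
              (N (update f L ((update f j₀ (f j₀ * f j₀)) j)))) :=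
    (Finset.add_sum_erase _ _ hj₀mem).symm
  have e2 : (∑ j ∈ univ.erase L,
        N (update (update f L z) j (N (update (update f j₀ (f j₀ * f j₀)) L (f j)))))
      = N (update (update f L z) j₀ (N (update (update f j₀ (f j₀ * f j₀)) L (f j₀))))
        + ∑ j ∈ (univ.erase L).erase j₀,
            N (update (update f L z) j (N (update (update f j₀ (f j₀ * f j₀)) L (f j)))) :=
    (Finset.add_sum_erase _ _ hj₀mem).symm
  -- the j₀-term of the first sum
  have c1 : N (update (update (update f j₀ (f j₀ * f j₀)) L z) j₀
        (N (update f L ((update f j₀ (f j₀ * f j₀)) j₀))))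
      = f j₀ * N (update (update f L z) j₀ (N (update f L (f j₀))))
        + N (update (update f L z) j₀ (N (update f L (f j₀)))) * f j₀
        + (N (update f L z) * N (update f L (f j₀))
            + N (update f L (f j₀)) * N (update f L z)) := by
    rw [Function.update_self, hgz, Function.update_idem, hleib L f (f j₀) (f j₀),
      expand2 (update f L z) j₀ (N (update f L (f j₀))),
      upd_self (update f L z) j₀ (f j₀) hBj₀]
  -- the j₀-term of the second sum
  have c3 : N (update (update f L z) j₀ (N (update (update f j₀ (f j₀ * f j₀)) L (f j₀))))
      = f j₀ * N (update (update f L z) j₀ (N (update f L (f j₀))))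
        + N (update (update f L z) j₀ (N (update f L (f j₀)))) * f j₀
        + (N (update f L z) * N (update f L (f j₀))
            + N (update f L (f j₀)) * N (update f L z)) := by
    rw [hDg (f j₀), expand2 (update f L z) j₀ (N (update f L (f j₀))),
      upd_self (update f L z) j₀ (f j₀) hBj₀]
  -- the remaining terms of the first sum
  have eT1 : (∑ j ∈ (univ.erase L).erase j₀,
        N (update (update (update f j₀ (f j₀ * f j₀)) L z) j
          (N (update f L ((update f j₀ (f j₀ * f j₀)) j)))))
      = ∑ j ∈ (univ.erase L).erase j₀,
          (f j₀ * N (update (update f L z) j (N (update f L (f j))))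
            + N (update (update f L z) j (N (update f L (f j)))) * f j₀) := by
    refine Finset.sum_congr rfl fun j hjT => ?_
    obtain ⟨hjj₀, hjmem⟩ := Finset.mem_erase.mp hjT
    have hjL : j ≠ L := (Finset.mem_erase.mp hjmem).1
    rw [Function.update_of_ne hjj₀, hgz, Function.update_comm (Ne.symm hjj₀), hleib,
      upd_self (update (update f L z) j (N (update f L (f j)))) j₀ (f j₀)
        (by rw [Function.update_of_ne (Ne.symm hjj₀), Function.update_of_ne hj])]
  -- the remaining terms of the second sum
  have eT2 : (∑ j ∈ (univ.erase L).erase j₀,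
        N (update (update f L z) j (N (update (update f j₀ (f j₀ * f j₀)) L (f j)))))
      = ∑ j ∈ (univ.erase L).erase j₀,
          (f j₀ * N (update (update f L z) j (N (update f L (f j))))
            + N (update (update f L z) j (N (update f L (f j)))) * f j₀
            + (N (update (update f L z) j (f j₀)) * N (update f L (f j))
              + N (update f L (f j)) * N (update (update f L z) j (f j₀)))) := by
    refine Finset.sum_congr rfl fun j hjT => ?_
    rw [hDg (f j)]
    exact expand2 (update f L z) j (N (update f L (f j)))
  -- sum manipulations
  have hT1 : (∑ j ∈ (univ.erase L).erase j₀,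
        (f j₀ * N (update (update f L z) j (N (update f L (f j))))
          + N (update (update f L z) j (N (update f L (f j)))) * f j₀))
      = f j₀ * (∑ j ∈ (univ.erase L).erase j₀,
            N (update (update f L z) j (N (update f L (f j)))))
        + (∑ j ∈ (univ.erase L).erase j₀,
            N (update (update f L z) j (N (update f L (f j))))) * f j₀ := by
    rw [Finset.sum_add_distrib, Finset.mul_sum, Finset.sum_mul]
  have hT2 : (∑ j ∈ (univ.erase L).erase j₀,
        (f j₀ * N (update (update f L z) j (N (update f L (f j))))
          + N (update (update f L z) j (N (update f L (f j)))) * f j₀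
          + (N (update (update f L z) j (f j₀)) * N (update f L (f j))
            + N (update f L (f j)) * N (update (update f L z) j (f j₀)))))
      = (f j₀ * (∑ j ∈ (univ.erase L).erase j₀,
            N (update (update f L z) j (N (update f L (f j)))))
        + (∑ j ∈ (univ.erase L).erase j₀,
            N (update (update f L z) j (N (update f L (f j))))) * f j₀)
        + ((∑ j ∈ (univ.erase L).erase j₀,
              N (update f L (f j)) * N (update (update f L z) j (f j₀)))
          + (∑ j ∈ (univ.erase L).erase j₀,
              N (update f L (f j)) * N (update (update f L z) j (f j₀)))) := by
    rw [Finset.sum_add_distrib, hT1]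
    congr 1
    rw [Finset.sum_congr rfl (fun j _ => by ring :
      ∀ j ∈ (univ.erase L).erase j₀,
        (N (update (update f L z) j (f j₀)) * N (update f L (f j))
          + N (update f L (f j)) * N (update (update f L z) j (f j₀)))
        = N (update f L (f j)) * N (update (update f L z) j (f j₀))
          + N (update f L (f j)) * N (update (update f L z) j (f j₀))),
      Finset.sum_add_distrib]
  -- the star identity, with the j₀-term split off
  have hWT : N (update (update f L z) j₀ (N (update f L (f j₀))))
      + ∑ j ∈ (univ.erase L).erase j₀,
          N (update (update f L z) j (N (update f L (f j)))) = 0 :=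
    (Finset.add_sum_erase _ (fun j => N (update (update f L z) j (N (update f L (f j))))) hj₀mem).trans
      (nl_star hfilL f z)
  linear_combination hF2 - e1 - e2 - c1 - c3 - eT1 - eT2 - hT1 - hT2 - 4 * (f j₀) * hWT


set_option linter.unusedSectionVars false

private lemma nl_core [IsReduced A]
    (hlin : ∀ (i : Fin n) (f : Fin n → A), IsLinearMap k fun a => N (update f i a))
    (hleib : ∀ (i : Fin n) (f : Fin n → A) (a b : A),
      N (update f i (a * b)) = a * N (update f i b) + N (update f i a) * b)
    (hfilL : ∀ f g : Fin n → A, N (update f L (N g)) =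
      ∑ j : Fin n, N (update g j (N (update f L (g j)))))
    (f : Fin n → A) (j₀ : Fin n) (hj : j₀ ≠ L)
    (hcond : ∀ j, j ≠ j₀ → j ≠ L → f j ≠ f j₀ →
      N (update (update f L (f j₀)) j (f j₀)) = 0) :
    N (update f L (f j₀)) = 0 := by
  classical
  have hK := nl_key hlin hleib hfilL f j₀ hj (f j₀)
  have hterm : ∀ j ∈ (univ.erase L).erase j₀,
      N (update f L (f j)) * N (update (update f L (f j₀)) j (f j₀))
        = if f j = f j₀ then N (update f L (f j₀)) * N (update f L (f j₀)) else 0 := by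
    intro j hjT
    obtain ⟨hjj₀, hjmem⟩ := Finset.mem_erase.mp hjT
    have hjL : j ≠ L := (Finset.mem_erase.mp hjmem).1
    by_cases hfx : f j = f j₀
    · rw [if_pos hfx, hfx]
      have hcollapse : update (update f L (f j₀)) j (f j₀) = update f L (f j₀) :=
        Function.update_eq_self_iff.mpr
          (by rw [Function.update_of_ne hjL, hfx])
      rw [hcollapse]
    · rw [if_neg hfx, hcond j hjj₀ hjL hfx, mul_zero]
  rw [Finset.sum_congr rfl hterm, Finset.sum_ite, Finset.sum_const,
    Finset.sum_const_zero, add_zero, nsmul_eq_mul] at hK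
  set c := (Finset.filter (fun j => f j = f j₀) ((univ.erase L).erase j₀)).card with hc
  have h2 : (4 + 2 * c) • (N (update f L (f j₀)) * N (update f L (f j₀))) = 0 := by
    rw [nsmul_eq_mul]
    push_cast
    linear_combination hK
  have h3 : N (update f L (f j₀)) * N (update f L (f j₀)) = 0 :=
    nl_nsmul_cancel k (by omega) h2
  exact IsReduced.eq_zero _ ⟨2, by rwa [pow_two]⟩

open scoped Classical in
private lemma nl_main [IsReduced A]
    (hlin : ∀ (i : Fin n) (f : Fin n → A), IsLinearMap k fun a => N (update f i a))
    (hleib : ∀ (i : Fin n) (f : Fin n → A) (a b : A),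
      N (update f i (a * b)) = a * N (update f i b) + N (update f i a) * b)
    (hfilL : ∀ f g : Fin n → A, N (update f L (N g)) =
      ∑ j : Fin n, N (update g j (N (update f L (g j)))))
    (m : ℕ) (f : Fin n → A) (j₀ : Fin n) (hj : j₀ ≠ L)
    (hcard : (((univ.erase L).filter (fun l => f l ≠ f j₀)).card ≤ m)) :
    N (update f L (f j₀)) = 0 := by
  induction m generalizing f with
  | zero =>
    refine nl_core hlin hleib hfilL f j₀ hj fun j hjj₀ hjL hfx => absurd hcard ?_
    have hmem : j ∈ (univ.erase L).filter (fun l => f l ≠ f j₀) :=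
      Finset.mem_filter.mpr ⟨Finset.mem_erase.mpr ⟨hjL, mem_univ j⟩, hfx⟩
    have := Finset.card_pos.mpr ⟨j, hmem⟩
    omega
  | succ m ih =>
    refine nl_core hlin hleib hfilL f j₀ hj fun j hjj₀ hjL hfx => ?_
    rw [Function.update_comm (Ne.symm hjL)]
    have hfj₀ : (update f j (f j₀)) j₀ = f j₀ := Function.update_of_ne (Ne.symm hjj₀) _ _
    have hjf : j ∈ (univ.erase L).filter (fun l => f l ≠ f j₀) :=
      Finset.mem_filter.mpr ⟨Finset.mem_erase.mpr ⟨hjL, mem_univ j⟩, hfx⟩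
    have hcard' : (((univ.erase L).filter
        (fun l => (update f j (f j₀)) l ≠ (update f j (f j₀)) j₀)).card ≤ m) := by
      have hsub : ((univ.erase L).filter
          (fun l => (update f j (f j₀)) l ≠ (update f j (f j₀)) j₀))
          ⊆ ((univ.erase L).filter (fun l => f l ≠ f j₀)).erase j := by
        intro l hl
        obtain ⟨hlmem, hlne⟩ := Finset.mem_filter.mp hl
        rw [hfj₀] at hlne
        have hlj : l ≠ j := by
          rintro rfl
          rw [Function.update_self] at hlne
          exact hlne rfl
        rw [Function.update_of_ne hlj] at hlne
        exact Finset.mem_erase.mpr ⟨hlj, Finset.mem_filter.mpr ⟨hlmem, hlne⟩⟩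
      have h1 := Finset.card_le_card hsub
      have h2 := Finset.card_erase_of_mem hjf
      have h3 := Finset.card_pos.mpr ⟨j, hjf⟩
      omega
    have h := ih (update f j (f j₀)) hcard'
    rwa [hfj₀] at h


private lemma nl_altLast [IsReduced A]
    (hlin : ∀ (i : Fin n) (f : Fin n → A), IsLinearMap k fun a => N (update f i a))
    (hleib : ∀ (i : Fin n) (f : Fin n → A) (a b : A),
      N (update f i (a * b)) = a * N (update f i b) + N (update f i a) * b)
    (hfilL : ∀ f g : Fin n → A, N (update f L (N g)) =
      ∑ j : Fin n, N (update g j (N (update f L (g j)))))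
    (g : Fin n → A) (j : Fin n) (hj : j ≠ L) (hval : g j = g L) : N g = 0 := by
  classical
  have h := nl_main hlin hleib hfilL
    (((univ.erase L).filter (fun l => g l ≠ g j)).card) g j hj le_rfl
  rwa [hval, Function.update_eq_self] at h

private lemma nl_alt [IsReduced A]
    (hlin : ∀ (i : Fin n) (f : Fin n → A), IsLinearMap k fun a => N (update f i a))
    (hleib : ∀ (i : Fin n) (f : Fin n → A) (a b : A),
      N (update f i (a * b)) = a * N (update f i b) + N (update f i a) * b)
    (hfilL : ∀ f g : Fin n → A, N (update f L (N g)) =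
      ∑ j : Fin n, N (update g j (N (update f L (g j)))))
    (g : Fin n → A) (i j : Fin n) (hij : i ≠ j) (hval : g i = g j) : N g = 0 := by
  by_cases hjL : j = L
  · subst hjL
    exact nl_altLast hlin hleib hfilL g i hij hval
  by_cases hiL : i = L
  · subst hiL
    exact nl_altLast hlin hleib hfilL g j hjL hval.symm
  -- polarization in the slots (j, L)
  have key2 : ∀ (h : Fin n → A) (a b : A),
      N (update (update h j a) L b) + N (update (update h j b) L a) = 0 := by
    intro h a b
    have hzero : N (update (update h j (a + b)) L (a + b)) = 0 :=
      nl_altLast hlin hleib hfilL _ j hjL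
        (by rw [Function.update_self, Function.update_of_ne hjL, Function.update_self])
    have e₂ : ∀ c : A, N (update (update h j (a + b)) L c)
        = N (update (update h j a) L c) + N (update (update h j b) L c) := by
      intro c
      rw [Function.update_comm hjL, (hlin j (update h L c)).map_add a b,
        Function.update_comm (Ne.symm hjL), Function.update_comm (Ne.symm hjL)]
    rw [(hlin L (update h j (a + b))).map_add a b, e₂ a, e₂ b] at hzero
    have z1 : N (update (update h j a) L a) = 0 :=
      nl_altLast hlin hleib hfilL _ j hjL
        (by rw [Function.update_self, Function.update_of_ne hjL, Function.update_self])
    have z2 : N (update (update h j b) L b) = 0 :=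
      nl_altLast hlin hleib hfilL _ j hjL
        (by rw [Function.update_self, Function.update_of_ne hjL, Function.update_self])
    linear_combination hzero - z1 - z2
  have h1 : update (update g j (g j)) L (g L) = g := by
    rw [Function.update_eq_self, Function.update_eq_self]
  have h2 := key2 g (g j) (g L)
  rw [h1] at h2
  have z3 : N (update (update g j (g L)) L (g j)) = 0 :=
    nl_altLast hlin hleib hfilL _ i hiL
      (by rw [Function.update_of_ne hiL, Function.update_of_ne hij, Function.update_self]
          exact hval)
  linear_combination h2 - z3

end NL


/-- On a commutative associative algebra `A` over a field of characteristic 0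
containing no nonzero nilpotents, every Nambu–Loday bracket — an `n`-linear
bracket satisfying the Filippov identity and the Leibniz rule in each
argument — is skew-symmetric (alternating); in particular it is a
Nambu–Poisson bracket. -/
theorem nambu_loday_is_skew {k A : Type*}
    [Field k] [CharZero k] [CommRing A] [Algebra k A] [IsReduced A]
    (n : ℕ) (hn : 0 < n) (N : (Fin n → A) → A)
    -- n-linearity in each argument
    (hlin : ∀ (i : Fin n) (f : Fin n → A),
      IsLinearMap k fun a => N (Function.update f i a))
    -- Leibniz rule in each argument
    (hleib : ∀ (i : Fin n) (f : Fin n → A) (a b : A),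
      N (Function.update f i (a * b)) =
        a * N (Function.update f i b) + N (Function.update f i a) * b)
    -- Filippov identity: {f_1,…,f_{n−1},{g_1,…,g_n}} =
    --   Σ_k {g_1,…,{f_1,…,f_{n−1},g_k},…,g_n}
    (hfil : ∀ f g : Fin n → A,
      N (Function.update f ⟨n - 1, by omega⟩ (N g)) =
        ∑ j : Fin n, N (Function.update g j
          (N (Function.update f ⟨n - 1, by omega⟩ (g j))))) :
    ∀ (f : Fin n → A) (i j : Fin n), i ≠ j →
      N (f ∘ Equiv.swap i j) = - N f := by
  intro f i j hij
  have halt := nl_alt (L := (⟨n - 1, by omega⟩ : Fin n)) hlin hleib hfil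
  -- polarization in the slots (i, j)
  have key3 : ∀ a b : A,
      N (update (update f i a) j b) + N (update (update f i b) j a) = 0 := by
    intro a b
    have hzero : N (update (update f i (a + b)) j (a + b)) = 0 :=
      halt _ i j hij
        (by rw [Function.update_of_ne hij, Function.update_self, Function.update_self])
    have e₂ : ∀ c : A, N (update (update f i (a + b)) j c)
        = N (update (update f i a) j c) + N (update (update f i b) j c) := by
      intro c
      rw [Function.update_comm hij, (hlin i (update f j c)).map_add a b,
        Function.update_comm (Ne.symm hij), Function.update_comm (Ne.symm hij)]
    rw [(hlin j (update f i (a + b))).map_add a b, e₂ a, e₂ b] at hzero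
    have z1 : N (update (update f i a) j a) = 0 :=
      halt _ i j hij
        (by rw [Function.update_of_ne hij, Function.update_self, Function.update_self])
    have z2 : N (update (update f i b) j b) = 0 :=
      halt _ i j hij
        (by rw [Function.update_of_ne hij, Function.update_self, Function.update_self])
    linear_combination hzero - z1 - z2
  have hswap : f ∘ Equiv.swap i j = update (update f i (f j)) j (f i) := by
    funext l
    rcases eq_or_ne l i with rfl | hli
    · simp [Equiv.swap_apply_left, Function.update_of_ne hij]
    · rcases eq_or_ne l j with rfl | hlj
      · simp [Equiv.swap_apply_right]
      · simp [Equiv.swap_apply_of_ne_of_ne hli hlj,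
          Function.update_of_ne hlj, Function.update_of_ne hli]
  rw [hswap]
  have h2 := key3 (f i) (f j)
  rw [Function.update_eq_self, Function.update_eq_self] at h2
  linear_combination h2
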